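/- Suppose f : [0, T] → R^d has the following property: there are constants K ≥ 1, 0 < γ < 1/H and n_0 such that for all n ≥ n_0 and every dyadic cube B ⊆ [−m, m]^d of side length 2^{−n}, the preimage f^{−1}(B) ∩ [0, T] can be covered by at most K intervals of length 2^{−γ n}. Then for every Borel set F ⊆ [−m, m]^d, dim_H ( f^{−1}(F) ∩ [0, T] ) ≤ (dim_H F)/γ. -/

import Mathlib

open MeasureTheory Metric Set ENNReal Filter Topology

noncomputable section

private lemma auxCover {X : Type*} [EMetricSpace X] [MeasurableSpace X] [BorelSpace X]
    {s : ℝ} {F : Set X} (h0 : μH[s] F = 0) {ρ ε : ℝ≥0∞} (hρ : 0 < ρ) (hε : 0 < ε) :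
    ∃ t : ℕ → Set X, F ⊆ ⋃ n, t n ∧ (∀ n, EMetric.diam (t n) ≤ ρ) ∧
      ∑' n, ⨆ _ : (t n).Nonempty, EMetric.diam (t n) ^ s ≤ ε := by
  have key : (⨅ (t : ℕ → Set X) (_ : F ⊆ ⋃ n, t n) (_ : ∀ n, EMetric.diam (t n) ≤ ρ),
      ∑' n, ⨆ _ : (t n).Nonempty, EMetric.diam (t n) ^ s) = 0 := by
    refine le_antisymm ?_ zero_le
    rw [← h0, MeasureTheory.Measure.hausdorffMeasure_apply]
    exact le_iSup₂ (f := fun (r : ℝ≥0∞) (_ : 0 < r) =>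
      ⨅ (t : ℕ → Set X) (_ : F ⊆ ⋃ n, t n) (_ : ∀ n, EMetric.diam (t n) ≤ r),
        ∑' n, ⨆ _ : (t n).Nonempty, EMetric.diam (t n) ^ s) ρ hρ
  have key2 : (⨅ (t : ℕ → Set X) (_ : F ⊆ ⋃ n, t n) (_ : ∀ n, EMetric.diam (t n) ≤ ρ),
      ∑' n, ⨆ _ : (t n).Nonempty, EMetric.diam (t n) ^ s) < ε := key ▸ hε
  simp only [iInf_lt_iff] at key2
  obtain ⟨t, h1, h2, h3⟩ := key2
  exact ⟨t, h1, h2, h3.le⟩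

private lemma coordDist {d : ℕ} (y z : EuclideanSpace ℝ (Fin d)) (i : Fin d) :
    |y i - z i| ≤ dist y z := by
  rw [EuclideanSpace.dist_eq]
  rw [show |y i - z i| = dist (y i) (z i) from (Real.dist_eq _ _).symm]
  refine (Real.le_sqrt dist_nonneg (Finset.sum_nonneg fun j _ => sq_nonneg _)).2 ?_
  exact Finset.single_le_sum (f := fun j => dist (y j) (z j) ^ 2) (fun j _ => sq_nonneg _) (Finset.mem_univ i)

private lemma floorDiff {u v : ℝ} (h : |u - v| ≤ 1) : ⌊u⌋ ≤ ⌊v⌋ + 1 ∧ ⌊v⌋ ≤ ⌊u⌋ + 1 := by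
  rw [abs_le] at h
  constructor
  · have h1 : u ≤ v + 1 := by linarith
    calc ⌊u⌋ ≤ ⌊v + 1⌋ := Int.floor_le_floor h1
      _ = ⌊v⌋ + 1 := Int.floor_add_one v
  · have h1 : v ≤ u + 1 := by linarith
    calc ⌊v⌋ ≤ ⌊u + 1⌋ := Int.floor_le_floor h1
      _ = ⌊u⌋ + 1 := Int.floor_add_one u

private lemma keyLemma {d : ℕ} (m : ℕ) (hm : 1 ≤ m) (f : ℝ → EuclideanSpace ℝ (Fin d))
    (T γ : ℝ) (hγ : 0 < γ) (K : ℕ) (hK : 1 ≤ K) (n₀ : ℕ)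
    (hcov : ∀ n : ℕ, n₀ ≤ n → ∀ j : Fin d → ℤ,
      (∀ i, -(m * 2 ^ n : ℤ) ≤ j i ∧ j i ≤ (m * 2 ^ n : ℤ) - 1) →
      ∃ a : Fin K → ℝ,
        f ⁻¹' {y : EuclideanSpace ℝ (Fin d) |
            ∀ i, (j i : ℝ) * (2 : ℝ)⁻¹ ^ n ≤ y i ∧ y i ≤ ((j i : ℝ) + 1) * (2 : ℝ)⁻¹ ^ n}
          ∩ Set.Icc 0 T
        ⊆ ⋃ i : Fin K, Set.Icc (a i) (a i + (2 : ℝ) ^ (-(γ * (n : ℝ)))))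
    (F : Set (EuclideanSpace ℝ (Fin d)))
    (hFbox : F ⊆ {y | ∀ i, |y i| ≤ (m : ℝ)}) (s : ℝ) (hs : 0 < s)
    (h0 : μH[s] F = 0) : μH[s / γ] (f ⁻¹' F ∩ Set.Icc 0 T) = 0 := by
  set P := f ⁻¹' F ∩ Set.Icc 0 T with hP
  refine le_antisymm ?_ zero_le
  refine ENNReal.le_of_forall_pos_le_add fun ε hε _ => ?_
  rw [zero_add]
  set c : ℝ := (2 : ℝ) ^ (-s) with hc
  have hc0 : 0 < c := Real.rpow_pos_of_pos two_pos _
  have hc1 : c < 1 := Real.rpow_lt_one_of_one_lt_of_neg one_lt_two (by linarith)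
  set b : ℝ := (2 : ℝ) ^ (-γ) with hb
  have hb0 : 0 < b := Real.rpow_pos_of_pos two_pos _
  have hb1 : b < 1 := Real.rpow_lt_one_of_one_lt_of_neg one_lt_two (by linarith)
  set CK : ℝ≥0∞ := ((3 ^ d * K : ℕ) : ℝ≥0∞) with hCK
  have hCK0 : CK ≠ 0 := by
    rw [hCK]
    exact Nat.cast_ne_zero.2 (by positivity)
  have hCKtop : CK ≠ ⊤ := ENNReal.natCast_ne_top _
  set Gc : ℝ≥0∞ := (1 - ENNReal.ofReal c)⁻¹ with hGc
  have hGctop : Gc ≠ ⊤ := by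
    rw [hGc, ENNReal.inv_ne_top, ← pos_iff_ne_zero, tsub_pos_iff_lt]
    exact ENNReal.ofReal_lt_one.2 hc1
  set ε' : ℝ≥0∞ := ((ε : ℝ≥0∞) / 2) / (CK * ENNReal.ofReal ((2 : ℝ) ^ s)) with hε'
  have hε'0 : 0 < ε' := by
    refine ENNReal.div_pos ?_ ?_
    · exact (ENNReal.div_pos (ENNReal.coe_ne_zero.2 hε.ne') ENNReal.ofNat_ne_top).ne'
    · exact ENNReal.mul_ne_top hCKtop ENNReal.ofReal_ne_top
  have claim : ∀ q : ℕ, ∃ U : ℕ × (Fin d → Fin 3) × Fin K → Set ℝ,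
      (P ⊆ ⋃ p, U p) ∧ (∀ p, EMetric.diam (U p) ≤ ENNReal.ofReal (b ^ q)) ∧
      ∑' p, EMetric.diam (U p) ^ (s / γ) ≤
        CK * (ENNReal.ofReal ((2 : ℝ) ^ s) * ε' + (ENNReal.ofReal c) ^ q * Gc) := by
    intro q
    classical
    set n₁ : ℕ := max (n₀ + 1) q with hn₁
    have hpow_half : ∀ N : ℕ, ((2 : ℝ)⁻¹) ^ N = (2 : ℝ) ^ (-(N : ℝ)) := fun N => by
      rw [inv_pow, ← Real.rpow_natCast (2 : ℝ) N, ← Real.rpow_neg (by norm_num)]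
    have hpow_c : ∀ N : ℕ, c ^ N = (2 : ℝ) ^ (-(s * (N : ℝ))) := fun N => by
      rw [hc, ← Real.rpow_natCast ((2 : ℝ) ^ (-s)) N, ← Real.rpow_mul (by norm_num), neg_mul]
    have hpow_b : ∀ N : ℕ, b ^ N = (2 : ℝ) ^ (-(γ * (N : ℝ))) := fun N => by
      rw [hb, ← Real.rpow_natCast ((2 : ℝ) ^ (-γ)) N, ← Real.rpow_mul (by norm_num), neg_mul]
    have hρ0 : (0 : ℝ≥0∞) < ENNReal.ofReal ((2 : ℝ)⁻¹ ^ n₁) :=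
      ENNReal.ofReal_pos.2 (by positivity)
    obtain ⟨t, htF, htd, hts⟩ := auxCover h0 hρ0 hε'0
    have hbdd : ∀ k, Bornology.IsBounded (t k) := fun k =>
      Metric.isBounded_iff_ediam_ne_top.2 (ne_top_of_le_ne_top ENNReal.ofReal_ne_top (htd k))
    set δ : ℕ → ℝ := fun k => Metric.diam (t k) with hδdef
    have hδ0 : ∀ k, 0 ≤ δ k := fun k => Metric.diam_nonneg
    have hδρ : ∀ k, δ k ≤ (2 : ℝ)⁻¹ ^ n₁ := fun k =>
      ENNReal.toReal_le_of_le_ofReal (by positivity) (htd k)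
    have hediam : ∀ k, EMetric.diam (t k) = ENNReal.ofReal (δ k) := fun k =>
      (ENNReal.ofReal_toReal (ne_top_of_le_ne_top ENNReal.ofReal_ne_top (htd k))).symm
    have hn₁1 : 1 ≤ n₁ := le_trans (by omega) (le_max_left (n₀ + 1) q)
    have hδ1 : ∀ k, δ k ≤ 1 := fun k => le_trans (hδρ k) (pow_le_one₀ (by norm_num) (by norm_num))
    set n : ℕ → ℕ := fun k => if δ k = 0 then n₁ + k else max n₁ ⌊Real.logb 2 (δ k)⁻¹⌋₊ with hndef
    have hn_ge : ∀ k, n₁ ≤ n k := fun k => by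
      rw [hndef]; dsimp only; split
      · exact Nat.le_add_right _ _
      · exact le_max_left _ _
    have hn0le : ∀ k, n₀ ≤ n k := fun k =>
      le_trans (le_trans (Nat.le_succ n₀) (le_max_left (n₀ + 1) q)) (hn_ge k)
    have hδn : ∀ k, δ k ≤ (2 : ℝ)⁻¹ ^ (n k) := by
      intro k
      rw [hndef]; dsimp only
      split
      · next h => rw [h]; positivity
      · next h =>
        have hδpos : 0 < δ k := lt_of_le_of_ne (hδ0 k) (Ne.symm h)
        have hδinv : 1 ≤ (δ k)⁻¹ := (one_le_inv₀ hδpos).2 (hδ1 k)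
        have hlogb : 0 ≤ Real.logb 2 (δ k)⁻¹ := Real.logb_nonneg one_lt_two hδinv
        rcases le_total ⌊Real.logb 2 (δ k)⁻¹⌋₊ n₁ with hM | hM
        · rw [max_eq_left hM]; exact hδρ k
        · rw [max_eq_right hM]
          have hMle : (⌊Real.logb 2 (δ k)⁻¹⌋₊ : ℝ) ≤ Real.logb 2 (δ k)⁻¹ := Nat.floor_le hlogb
          rw [hpow_half]
          calc δ k = (2 : ℝ) ^ (-Real.logb 2 (δ k)⁻¹) := by
                rw [Real.rpow_neg (by norm_num), Real.rpow_logb two_pos (by norm_num) (by positivity),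
                  inv_inv]
            _ ≤ (2 : ℝ) ^ (-(⌊Real.logb 2 (δ k)⁻¹⌋₊ : ℝ)) :=
                Real.rpow_le_rpow_of_exponent_le one_le_two (neg_le_neg hMle)
    have hcn : ∀ k, c ^ (n k) ≤ (2 : ℝ) ^ s * (δ k) ^ s ∨ n k = n₁ + k := by
      intro k
      rw [hndef]; dsimp only
      split
      · next h => exact Or.inr rfl
      · next h =>
        left
        have hδpos : 0 < δ k := lt_of_le_of_ne (hδ0 k) (Ne.symm h)
        have hlog : Real.logb 2 (δ k)⁻¹ - 1 ≤ ((max n₁ ⌊Real.logb 2 (δ k)⁻¹⌋₊ : ℕ) : ℝ) := by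
          have h1 : Real.logb 2 (δ k)⁻¹ < (⌊Real.logb 2 (δ k)⁻¹⌋₊ : ℝ) + 1 :=
            Nat.lt_floor_add_one _
          have h2 : ((⌊Real.logb 2 (δ k)⁻¹⌋₊ : ℕ) : ℝ) ≤ ((max n₁ ⌊Real.logb 2 (δ k)⁻¹⌋₊ : ℕ) : ℝ) := by
            exact_mod_cast le_max_right n₁ _
          linarith
        rw [hpow_c]
        have hexp : -(s * ((max n₁ ⌊Real.logb 2 (δ k)⁻¹⌋₊ : ℕ) : ℝ)) ≤
            s + -(s * Real.logb 2 (δ k)⁻¹) := by nlinarith [hlog, hs.le]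
        calc (2 : ℝ) ^ (-(s * ((max n₁ ⌊Real.logb 2 (δ k)⁻¹⌋₊ : ℕ) : ℝ)))
            ≤ (2 : ℝ) ^ (s + -(s * Real.logb 2 (δ k)⁻¹)) :=
              Real.rpow_le_rpow_of_exponent_le one_le_two hexp
          _ = (2 : ℝ) ^ s * (2 : ℝ) ^ (-(s * Real.logb 2 (δ k)⁻¹)) :=
              Real.rpow_add two_pos _ _
          _ = (2 : ℝ) ^ s * (δ k) ^ s := by
              congr 1
              rw [show -(s * Real.logb 2 (δ k)⁻¹) = Real.logb 2 (δ k)⁻¹ * (-s) by ring,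
                Real.rpow_mul (by norm_num), Real.rpow_logb two_pos (by norm_num) (by positivity),
                Real.rpow_neg (by positivity), Real.inv_rpow (by positivity), inv_inv]
    -- anchors and dyadic indices
    set y0 : ℕ → EuclideanSpace ℝ (Fin d) := fun k =>
      if h : (t k ∩ F).Nonempty then h.choose else 0 with hy0def
    have hy0 : ∀ k, (t k ∩ F).Nonempty → y0 k ∈ t k ∩ F := fun k h => by
      rw [hy0def]; dsimp only; rw [dif_pos h]; exact h.choose_spec
    set A : ℕ → Fin d → ℤ := fun k i => ⌊y0 k i * 2 ^ (n k)⌋ with hA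
    set jj : ℕ → (Fin d → Fin 3) → Fin d → ℤ := fun k e i =>
      max (-(m * 2 ^ (n k) : ℤ)) (min ((m * 2 ^ (n k) : ℤ) - 1) (A k i - 1 + ((e i : ℕ) : ℤ)))
      with hjj
    have hlohi : ∀ k, (1 : ℤ) ≤ (m : ℤ) * 2 ^ (n k) := by
      intro k
      have h1 : (1 : ℤ) ≤ (m : ℤ) := by exact_mod_cast hm
      have h2 : (1 : ℤ) ≤ 2 ^ (n k) := one_le_pow₀ (by norm_num)
      nlinarith
    have hjrange : ∀ k (e : Fin d → Fin 3) i,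
        -((m : ℤ) * 2 ^ (n k)) ≤ jj k e i ∧ jj k e i ≤ (m : ℤ) * 2 ^ (n k) - 1 := by
      intro k e i
      constructor
      · exact le_max_left _ _
      · exact max_le (by linarith [hlohi k]) (min_le_left _ _)
    have hch : ∀ k (e : Fin d → Fin 3), ∃ a : Fin K → ℝ,
        f ⁻¹' {y : EuclideanSpace ℝ (Fin d) |
            ∀ i, (jj k e i : ℝ) * (2 : ℝ)⁻¹ ^ (n k) ≤ y i ∧
              y i ≤ ((jj k e i : ℝ) + 1) * (2 : ℝ)⁻¹ ^ (n k)} ∩ Set.Icc 0 T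
          ⊆ ⋃ i : Fin K, Set.Icc (a i) (a i + (2 : ℝ) ^ (-(γ * ((n k : ℕ) : ℝ)))) :=
      fun k e => hcov (n k) (hn0le k) (jj k e) (fun i => hjrange k e i)
    choose a ha using hch
    set U : ℕ × (Fin d → Fin 3) × Fin K → Set ℝ := fun p =>
      Set.Icc (a p.1 p.2.1 p.2.2) (a p.1 p.2.1 p.2.2 + (2 : ℝ) ^ (-(γ * ((n p.1 : ℕ) : ℝ)))) with hUdef
    have hdiamU : ∀ p, EMetric.diam (U p) = ENNReal.ofReal (b ^ (n p.1)) := fun p => by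
      rw [hUdef]; dsimp only
      rw [show (EMetric.diam : Set ℝ → ℝ≥0∞) = Metric.ediam from rfl, Real.ediam_Icc, add_sub_cancel_left, hpow_b]
    refine ⟨U, ?_, ?_, ?_⟩
    · -- covering
      rintro x ⟨hxF, hxI⟩
      obtain ⟨k, hk⟩ := Set.mem_iUnion.1 (htF hxF)
      have hne : (t k ∩ F).Nonempty := ⟨f x, hk, hxF⟩
      have hy0m := hy0 k hne
      have hybox : ∀ i, |y0 k i| ≤ (m : ℝ) := fun i => hFbox hy0m.2 i
      have hxbox : ∀ i, |f x i| ≤ (m : ℝ) := fun i => hFbox hxF i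
      have h2pos : (0 : ℝ) < 2 ^ (n k) := by positivity
      set Bf : Fin d → ℤ := fun i => ⌊f x i * 2 ^ (n k)⌋ with hBf
      have hAB : ∀ i, Bf i ≤ A k i + 1 ∧ A k i ≤ Bf i + 1 := by
        intro i
        apply floorDiff
        have h1 : |f x i - y0 k i| ≤ δ k :=
          le_trans (coordDist _ _ i) (dist_le_diam_of_mem (hbdd k) hk hy0m.1)
        have h2 : |f x i * 2 ^ (n k) - y0 k i * 2 ^ (n k)| = |f x i - y0 k i| * 2 ^ (n k) := by
          rw [← sub_mul, abs_mul, abs_of_pos h2pos]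
        rw [h2]
        calc |f x i - y0 k i| * 2 ^ (n k) ≤ (2 : ℝ)⁻¹ ^ (n k) * 2 ^ (n k) :=
              mul_le_mul_of_nonneg_right (h1.trans (hδn k)) h2pos.le
          _ = 1 := by rw [inv_pow, inv_mul_cancel₀ (ne_of_gt h2pos)]
      set e : Fin d → Fin 3 := fun i => ⟨(Bf i - A k i + 1).toNat, by have := hAB i; omega⟩ with he
      have hje : ∀ i, jj k e i = max (-(m * 2 ^ (n k) : ℤ)) (min ((m * 2 ^ (n k) : ℤ) - 1) (Bf i)) := by
        intro i
        rw [hjj]; dsimp only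
        have h1 : ((e i : ℕ) : ℤ) = Bf i - A k i + 1 := by
          rw [he]; dsimp only
          rw [Int.toNat_of_nonneg (by have := hAB i; omega)]
        rw [h1]
        congr 1
        congr 1
        omega
      have hBlo : ∀ i, -(m * 2 ^ (n k) : ℤ) ≤ Bf i := by
        intro i
        rw [hBf]; dsimp only
        refine Int.le_floor.2 ?_
        push_cast
        calc -((m : ℝ) * 2 ^ (n k)) = -(m : ℝ) * 2 ^ (n k) := by ring
          _ ≤ f x i * 2 ^ (n k) :=
            mul_le_mul_of_nonneg_right (abs_le.1 (hxbox i)).1 h2pos.le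
      have hBhi : ∀ i, Bf i ≤ (m * 2 ^ (n k) : ℤ) := by
        intro i
        rw [hBf]; dsimp only
        have hfm : f x i * 2 ^ (n k) ≤ ((m * 2 ^ (n k) : ℤ) : ℝ) := by
          push_cast
          exact mul_le_mul_of_nonneg_right (abs_le.1 (hxbox i)).2 h2pos.le
        calc ⌊f x i * 2 ^ (n k)⌋ ≤ ⌊((m * 2 ^ (n k) : ℤ) : ℝ)⌋ := Int.floor_le_floor hfm
          _ = (m * 2 ^ (n k) : ℤ) := Int.floor_intCast _
      have hmem : ∀ i, (jj k e i : ℝ) * (2 : ℝ)⁻¹ ^ (n k) ≤ f x i ∧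
          f x i ≤ ((jj k e i : ℝ) + 1) * (2 : ℝ)⁻¹ ^ (n k) := by
        intro i
        have hdiv1 : ∀ z : ℝ, z * (2 : ℝ)⁻¹ ^ (n k) ≤ f x i ↔ z ≤ f x i * 2 ^ (n k) := by
          intro z
          rw [inv_pow, ← div_eq_mul_inv]
          exact div_le_iff₀ h2pos
        have hdiv2 : ∀ z : ℝ, f x i ≤ z * (2 : ℝ)⁻¹ ^ (n k) ↔ f x i * 2 ^ (n k) ≤ z := by
          intro z
          rw [inv_pow, ← div_eq_mul_inv]
          exact (le_div_iff₀ h2pos)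
        by_cases hcase : Bf i ≤ (m * 2 ^ (n k) : ℤ) - 1
        · have hv : jj k e i = Bf i := by
            rw [hje i, min_eq_right hcase, max_eq_right (hBlo i)]
          rw [hv]
          constructor
          · rw [hdiv1]; exact Int.floor_le _
          · rw [hdiv2]
            have := Int.lt_floor_add_one (f x i * 2 ^ (n k))
            push_cast
            linarith
        · have hBeq : Bf i = (m * 2 ^ (n k) : ℤ) := by
            have := hBhi i; omega
          have hfge : ((m * 2 ^ (n k) : ℤ) : ℝ) ≤ f x i * 2 ^ (n k) := by
            rw [← hBeq]; exact Int.floor_le _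
          have hv : jj k e i = (m * 2 ^ (n k) : ℤ) - 1 := by
            rw [hje i, hBeq, min_eq_left (by omega), max_eq_right (by linarith [hlohi k])]
          rw [hv]
          constructor
          · rw [hdiv1]
            push_cast
            push_cast at hfge
            linarith
          · rw [hdiv2]
            push_cast
            have : f x i * 2 ^ (n k) ≤ ((m * 2 ^ (n k) : ℤ) : ℝ) := by
              push_cast
              exact mul_le_mul_of_nonneg_right (abs_le.1 (hxbox i)).2 h2pos.le
            push_cast at this
            linarith
      have hxc : x ∈ f ⁻¹' {y : EuclideanSpace ℝ (Fin d) |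
          ∀ i, (jj k e i : ℝ) * (2 : ℝ)⁻¹ ^ (n k) ≤ y i ∧
            y i ≤ ((jj k e i : ℝ) + 1) * (2 : ℝ)⁻¹ ^ (n k)} ∩ Set.Icc 0 T := ⟨hmem, hxI⟩
      obtain ⟨i, hi'⟩ := Set.mem_iUnion.1 (ha k e hxc)
      exact Set.mem_iUnion.2 ⟨(k, e, i), hi'⟩
    · intro p
      rw [hdiamU p]
      exact ENNReal.ofReal_le_ofReal
        (pow_le_pow_of_le_one hb0.le hb1.le (le_trans (le_max_right (n₀ + 1) q) (hn_ge p.1)))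
    · -- sum bound
      have hrpowU : ∀ p : ℕ × (Fin d → Fin 3) × Fin K,
          EMetric.diam (U p) ^ (s / γ) = ENNReal.ofReal (c ^ (n p.1)) := by
        intro p
        rw [hdiamU p, ENNReal.ofReal_rpow_of_pos (by positivity)]
        congr 1
        rw [hpow_b, ← Real.rpow_mul (by norm_num : (0 : ℝ) ≤ 2), hpow_c (n p.1)]
        congr 1
        field_simp
      have hpart1 : ∑' k : ℕ, ENNReal.ofReal (δ k ^ s) ≤ ε' := by
        refine le_trans (ENNReal.tsum_le_tsum fun k => ?_) hts
        by_cases hne : (t k).Nonempty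
        · rw [iSup_pos hne, hediam k, ENNReal.ofReal_rpow_of_nonneg (hδ0 k) hs.le]
        · have hd0 : δ k = 0 := by
            rw [hδdef]; dsimp only
            rw [Set.not_nonempty_iff_eq_empty.1 hne]
            exact Metric.diam_empty
          rw [hd0, Real.zero_rpow hs.ne', ENNReal.ofReal_zero]
          exact zero_le
      have hpart2 : ∑' k : ℕ, ENNReal.ofReal (c ^ (n₁ + k)) ≤ (ENNReal.ofReal c) ^ q * Gc := by
        have h1 : ∀ k : ℕ, ENNReal.ofReal (c ^ (n₁ + k)) =
            (ENNReal.ofReal c) ^ n₁ * (ENNReal.ofReal c) ^ k := by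
          intro k
          rw [← ENNReal.ofReal_pow hc0.le, ← ENNReal.ofReal_pow hc0.le,
            ← ENNReal.ofReal_mul (by positivity), ← pow_add]
        calc ∑' k : ℕ, ENNReal.ofReal (c ^ (n₁ + k))
            = ∑' k : ℕ, (ENNReal.ofReal c) ^ n₁ * (ENNReal.ofReal c) ^ k := tsum_congr h1
          _ = (ENNReal.ofReal c) ^ n₁ * ∑' k : ℕ, (ENNReal.ofReal c) ^ k := ENNReal.tsum_mul_left
          _ = (ENNReal.ofReal c) ^ n₁ * Gc := by rw [ENNReal.tsum_geometric, hGc]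
          _ ≤ (ENNReal.ofReal c) ^ q * Gc := by
              refine mul_le_mul_left ?_ Gc
              exact pow_le_pow_of_le_one zero_le (ENNReal.ofReal_le_one.2 hc1.le)
                (le_trans (le_max_right (n₀ + 1) q) le_rfl)
      have hmid : ∑' k : ℕ, ENNReal.ofReal (c ^ (n k)) ≤
          ENNReal.ofReal ((2 : ℝ) ^ s) * ε' + (ENNReal.ofReal c) ^ q * Gc := by
        calc ∑' k : ℕ, ENNReal.ofReal (c ^ (n k))
            ≤ ∑' k : ℕ, (ENNReal.ofReal ((2 : ℝ) ^ s * δ k ^ s) + ENNReal.ofReal (c ^ (n₁ + k))) := by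
              refine ENNReal.tsum_le_tsum fun k => ?_
              rcases hcn k with h | h
              · exact le_add_right (ENNReal.ofReal_le_ofReal h)
              · rw [h]; exact le_add_left (le_refl _)
          _ = ∑' k : ℕ, ENNReal.ofReal ((2 : ℝ) ^ s * δ k ^ s) +
              ∑' k : ℕ, ENNReal.ofReal (c ^ (n₁ + k)) := ENNReal.tsum_add
          _ ≤ ENNReal.ofReal ((2 : ℝ) ^ s) * ε' + (ENNReal.ofReal c) ^ q * Gc := by
              refine add_le_add ?_ hpart2
              calc ∑' k : ℕ, ENNReal.ofReal ((2 : ℝ) ^ s * δ k ^ s)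
                  = ∑' k : ℕ, ENNReal.ofReal ((2 : ℝ) ^ s) * ENNReal.ofReal (δ k ^ s) :=
                    tsum_congr fun k => ENNReal.ofReal_mul (by positivity)
                _ = ENNReal.ofReal ((2 : ℝ) ^ s) * ∑' k : ℕ, ENNReal.ofReal (δ k ^ s) :=
                    ENNReal.tsum_mul_left
                _ ≤ ENNReal.ofReal ((2 : ℝ) ^ s) * ε' := mul_le_mul_right hpart1 _
      calc ∑' p : ℕ × (Fin d → Fin 3) × Fin K, EMetric.diam (U p) ^ (s / γ)
          = ∑' p : ℕ × (Fin d → Fin 3) × Fin K, ENNReal.ofReal (c ^ (n p.1)) :=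
            tsum_congr hrpowU
        _ = ∑' k : ℕ, CK * ENNReal.ofReal (c ^ (n k)) := by
            rw [ENNReal.tsum_prod (f := fun k (_ : (Fin d → Fin 3) × Fin K) =>
              ENNReal.ofReal (c ^ (n k)))]
            refine tsum_congr fun k => ?_
            rw [tsum_fintype]
            simp only [Finset.sum_const, Finset.card_univ, Fintype.card_prod, Fintype.card_fun,
              Fintype.card_fin, nsmul_eq_mul, hCK]
        _ = CK * ∑' k : ℕ, ENNReal.ofReal (c ^ (n k)) := ENNReal.tsum_mul_left
        _ ≤ CK * (ENNReal.ofReal ((2 : ℝ) ^ s) * ε' + (ENNReal.ofReal c) ^ q * Gc) :=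
            mul_le_mul_right hmid CK
  choose U hU1 hU2 hU3 using claim
  have htend : Tendsto (fun q : ℕ => ENNReal.ofReal (b ^ q)) atTop (𝓝 0) := by
    have h1 : Tendsto (fun q : ℕ => b ^ q) atTop (𝓝 0) :=
      tendsto_pow_atTop_nhds_zero_of_lt_one hb0.le hb1
    simpa using ENNReal.tendsto_ofReal h1
  have hle : μH[s / γ] P ≤ liminf (fun q => ∑' p, EMetric.diam (U q p) ^ (s / γ)) atTop :=
    MeasureTheory.Measure.hausdorffMeasure_le_liminf_tsum _ P _ htend U
      (Eventually.of_forall hU2) (Eventually.of_forall hU1)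
  refine hle.trans (liminf_le_of_frequently_le' ?_)
  have hev : ∀ᶠ q : ℕ in atTop,
      CK * (ENNReal.ofReal ((2 : ℝ) ^ s) * ε' + (ENNReal.ofReal c) ^ q * Gc) ≤ (ε : ℝ≥0∞) := by
    have hhalf : (0 : ℝ≥0∞) < (ε : ℝ≥0∞) / 2 :=
      ENNReal.div_pos (ENNReal.coe_ne_zero.2 hε.ne') ENNReal.ofNat_ne_top
    have htend2 : Tendsto (fun q : ℕ => CK * Gc * (ENNReal.ofReal c) ^ q) atTop (𝓝 0) := by
      have h2 : Tendsto (fun q : ℕ => (ENNReal.ofReal c) ^ q) atTop (𝓝 0) :=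
        ENNReal.tendsto_pow_atTop_nhds_zero_of_lt_one (ENNReal.ofReal_lt_one.2 hc1)
      simpa using ENNReal.Tendsto.const_mul h2 (Or.inr (ENNReal.mul_ne_top hCKtop hGctop))
    filter_upwards [htend2.eventually (gt_mem_nhds hhalf)] with q hq
    have h3 : CK * (ENNReal.ofReal ((2 : ℝ) ^ s) * ε') ≤ (ε : ℝ≥0∞) / 2 := by
      rw [← mul_assoc, hε']
      exact ENNReal.mul_div_le
    have h4 : CK * ((ENNReal.ofReal c) ^ q * Gc) ≤ (ε : ℝ≥0∞) / 2 := by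
      calc CK * ((ENNReal.ofReal c) ^ q * Gc) = CK * Gc * (ENNReal.ofReal c) ^ q := by ring
        _ ≤ (ε : ℝ≥0∞) / 2 := hq.le
    calc CK * (ENNReal.ofReal ((2 : ℝ) ^ s) * ε' + (ENNReal.ofReal c) ^ q * Gc)
        = CK * (ENNReal.ofReal ((2 : ℝ) ^ s) * ε') + CK * ((ENNReal.ofReal c) ^ q * Gc) := by ring
      _ ≤ (ε : ℝ≥0∞) / 2 + (ε : ℝ≥0∞) / 2 := add_le_add h3 h4
      _ = (ε : ℝ≥0∞) := ENNReal.add_halves _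
  exact (hev.mono fun q hq => (hU3 q).trans hq).frequently

theorem stmt5 {d : ℕ} (m : ℕ) (hm : 1 ≤ m)
    (f : ℝ → EuclideanSpace ℝ (Fin d))
    (T H γ : ℝ) (hT : 0 < T) (hH : 0 < H) (hγ : 0 < γ) (hγH : γ < 1 / H)
    (K : ℕ) (hK : 1 ≤ K) (n₀ : ℕ)
    (hcov : ∀ n : ℕ, n₀ ≤ n → ∀ j : Fin d → ℤ,
      (∀ i, -(m * 2 ^ n : ℤ) ≤ j i ∧ j i ≤ (m * 2 ^ n : ℤ) - 1) →
      ∃ a : Fin K → ℝ,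
        f ⁻¹' {y : EuclideanSpace ℝ (Fin d) |
            ∀ i, (j i : ℝ) * (2 : ℝ)⁻¹ ^ n ≤ y i ∧ y i ≤ ((j i : ℝ) + 1) * (2 : ℝ)⁻¹ ^ n}
          ∩ Set.Icc 0 T
        ⊆ ⋃ i : Fin K, Set.Icc (a i) (a i + (2 : ℝ) ^ (-(γ * (n : ℝ))))) :
    ∀ F : Set (EuclideanSpace ℝ (Fin d)),
      F ⊆ {y | ∀ i, |y i| ≤ (m : ℝ)} → MeasurableSet F →
      dimH (f ⁻¹' F ∩ Set.Icc 0 T) ≤ dimH F / ENNReal.ofReal γ := by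
  intro F hFbox hFmeas
  have hγ0 : ENNReal.ofReal γ ≠ 0 := (ENNReal.ofReal_pos.2 hγ).ne'
  rw [ENNReal.le_div_iff_mul_le (Or.inl hγ0) (Or.inl ENNReal.ofReal_ne_top)]
  by_contra hlt
  push_neg at hlt
  obtain ⟨u, hu1, hu2⟩ := ENNReal.lt_iff_exists_nnreal_btwn.1 hlt
  have hu0 : (0 : ℝ) < (u : ℝ) := by
    rcases eq_or_lt_of_le u.2 with h | h
    · exfalso
      rw [show u = 0 from NNReal.coe_injective h.symm] at hu1
      simp at hu1
    · exact h
  have hFs : μH[(u : ℝ)] F = 0 := hausdorffMeasure_of_dimH_lt hu1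
  have hP0 : μH[(u : ℝ) / γ] (f ⁻¹' F ∩ Set.Icc 0 T) = 0 :=
    keyLemma m hm f T γ hγ K hK n₀ hcov F hFbox (u : ℝ) hu0 hFs
  set w : NNReal := u / γ.toNNReal with hw
  have hwc : ((w : NNReal) : ℝ) = (u : ℝ) / γ := by
    rw [hw, NNReal.coe_div, Real.coe_toNNReal γ hγ.le]
  have hd : dimH (f ⁻¹' F ∩ Set.Icc 0 T) ≤ (w : ℝ≥0∞) := by
    refine dimH_le_of_hausdorffMeasure_ne_top ?_
    rw [hwc, hP0]
    exact ENNReal.zero_ne_top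
  have hfin : dimH (f ⁻¹' F ∩ Set.Icc 0 T) * ENNReal.ofReal γ ≤ (u : ℝ≥0∞) := by
    calc dimH (f ⁻¹' F ∩ Set.Icc 0 T) * ENNReal.ofReal γ
        ≤ (w : ℝ≥0∞) * ENNReal.ofReal γ := by
          exact mul_le_mul_left hd _
      _ = ((w * γ.toNNReal : NNReal) : ℝ≥0∞) := by
          rw [ENNReal.ofReal, ← ENNReal.coe_mul]
      _ = (u : ℝ≥0∞) := by
          congr 1
          rw [hw, div_mul_cancel₀]
          exact fun h => (by simp [Real.toNNReal_eq_zero] at h; linarith : False)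
  exact absurd (hu2.trans_le hfin) (lt_irrefl _)
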